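/- Let G be a finite group, p a prime dividing |G|, and H ⊆ G a subgroup with p dividing |H| and rk_p(H) = rk_p(G) = rk(G). If G has a p-effective character, then H has a p-effective character. -/

import Mathlib

open scoped Classical

/-- A subgroup is elementary abelian for the prime `p` if it is commutative and
every element has order dividing `p`. -/
def IsElementaryAbelian (p : ℕ) {G : Type*} [Group G] (H : Subgroup G) : Prop :=
  (∀ x ∈ H, ∀ y ∈ H, x * y = y * x) ∧ ∀ x ∈ H, x ^ p = 1

/-- The `p`-rank of a group. -/
noncomputable def pRank (p : ℕ) (G : Type*) [Group G] : ℕ :=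
  sSup {n | ∃ E : Subgroup G, IsElementaryAbelian p E ∧ Nat.card E = p ^ n}

/-- The rank of a group: the maximum of the `p`-ranks over all primes `p`. -/
noncomputable def groupRank (G : Type*) [Group G] : ℕ :=
  sSup {n | ∃ p : ℕ, p.Prime ∧ n = pRank p G}

/-- `G` has a `p`-effective character (relative to the rank `r`): a nonzero complex
character `χ` of a Sylow `p`-subgroup `G_p` that respects fusion in `G` and satisfies
`[χ|_E, 1_E] = 0` for every elementary abelian subgroup `E ⊆ G_p` of rank `r`. -/
def HasPEffectiveChar (p : ℕ) (G : Type) [Group G] [Fintype G] (r : ℕ) : Prop :=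
  ∃ (Gp : Sylow p G) (V : FDRep ℂ Gp) (χ : Gp → ℂ), χ = V.character ∧ χ ≠ 0 ∧
    (∀ h k : Gp, (∃ g : G, g * ↑h * g⁻¹ = ↑k) → χ h = χ k) ∧
    ∀ E : Subgroup Gp, IsElementaryAbelian p E → Nat.card E = p ^ r →
      (Nat.card E : ℂ)⁻¹ * ∑ e : E, χ ↑e = 0

theorem stmt_16 {p : ℕ} [Fact p.Prime] {G : Type} [Group G] [Fintype G]
    (H : Subgroup G) (hdvdG : p ∣ Nat.card G) (hdvdH : p ∣ Nat.card H)
    (hrk : pRank p H = pRank p G) (hrkG : pRank p G = groupRank G)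
    (hGeff : HasPEffectiveChar p G (groupRank G)) :
    HasPEffectiveChar p H (groupRank G) := by
  obtain ⟨Gp, V, χ, hχ, hχ0, hfus, hEA⟩ := hGeff
  obtain ⟨Hp⟩ : Nonempty (Sylow p H) := inferInstance
  obtain ⟨P, hQP⟩ := (Hp.2.map H.subtype).exists_le_sylow
  obtain ⟨g, hg⟩ := MulAction.exists_smul_eq G P Gp
  have hmem : ∀ x : (Hp : Subgroup H), g * ((x : H) : G) * g⁻¹ ∈ Gp := by
    intro x
    have h1 : ((x : H) : G) ∈ P := hQP ⟨(x : H), x.2, rfl⟩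
    have h2 : g * ((x : H) : G) * g⁻¹ ∈ (↑(g • P) : Set G) := by
      rw [Sylow.coe_smul]
      exact ⟨_, h1, rfl⟩
    rw [hg] at h2
    exact h2
  let φ : (Hp : Subgroup H) →* (Gp : Subgroup G) :=
    { toFun := fun x => ⟨g * ((x : H) : G) * g⁻¹, hmem x⟩
      map_one' := by ext; simp
      map_mul' := by intro a b; ext; push_cast; group }
  have hφval : ∀ x : (Hp : Subgroup H), ((φ x : G)) = g * ((x : H) : G) * g⁻¹ := fun _ => rfl
  have hφinj : Function.Injective φ := by
    intro a b hab
    have h1 : g * ((a : H) : G) * g⁻¹ = g * ((b : H) : G) * g⁻¹ := congrArg Subtype.val hab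
    have h2 : ((a : H) : G) = ((b : H) : G) := by
      have := mul_right_cancel h1
      exact mul_left_cancel this
    exact Subtype.ext (Subtype.ext h2)
  let V' : FDRep ℂ (Hp : Subgroup H) := (Action.res _ φ).obj V
  refine ⟨Hp, V', fun x => χ (φ x), ?_, ?_, ?_, ?_⟩
  · funext x
    rw [hχ]
    rfl
  · -- nonzero
    have hχ1 : χ 1 ≠ 0 := by
      intro h0
      apply hχ0
      have h1 : (Module.finrank ℂ V : ℂ) = 0 := by
        rw [← FDRep.char_one V, ← hχ]; exact h0
      have hfr : Module.finrank ℂ V = 0 := by exact_mod_cast h1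
      haveI : Subsingleton V := Module.finrank_zero_iff.mp hfr
      funext x
      rw [hχ]
      show LinearMap.trace ℂ V (V.ρ x) = 0
      rw [Subsingleton.elim (V.ρ x) 0, map_zero]
    intro h0
    apply hχ1
    have := congrFun h0 1
    rwa [map_one φ] at this
  · rintro h k ⟨b, hb⟩
    apply hfus
    refine ⟨g * (b : G) * g⁻¹, ?_⟩
    have hb' : (b : G) * ((h : H) : G) * (b : G)⁻¹ = ((k : H) : G) := by
      have := congrArg H.subtype hb
      push_cast at this
      exact this
    rw [hφval, hφval, ← hb']
    group
  · intro E hEab hEcard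
    have hcardE : Nat.card E = Nat.card (E.map φ) :=
      Nat.card_congr (E.equivMapOfInjective φ hφinj).toEquiv
    have hE'ab : IsElementaryAbelian p (E.map φ) := by
      constructor
      · rintro x ⟨a, ha, rfl⟩ y ⟨b, hb, rfl⟩
        rw [← map_mul, ← map_mul, hEab.1 a ha b hb]
      · rintro x ⟨a, ha, rfl⟩
        rw [← map_pow, hEab.2 a ha, map_one]
    have hkey := hEA (E.map φ) hE'ab (hcardE ▸ hEcard)
    have hsum : ∑ e : E, χ (φ ↑e) = ∑ e : E.map φ, χ ↑e :=
      Fintype.sum_equiv (E.equivMapOfInjective φ hφinj).toEquiv _ _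
        (fun x => (congrArg χ (E.coe_equivMapOfInjective_apply φ hφinj x)).symm)
    rw [hsum, hcardE]
    exact hkey
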